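/- arXiv:1704.07014 — 3 statements merged into one kernel-verified Lean document; each statement's English description precedes it below -/
import Mathlib

section
/- The golden algebra (ℚ(i,√5)/ℚ(i), σ, i) is a division algebra; equivalently, the reduced norm N_rd(x₀+x₁e) = x₀σ(x₀) − i·x₁σ(x₁) is nonzero for every nonzero element x₀ + x₁e. -/
open Complex
noncomputable def GKfield : Subfield ℂ :=
  Subfield.closure {Complex.I, (Real.sqrt 5 : ℂ)}
lemma I_mem_GK : Complex.I ∈ GKfield :=
  Subfield.subset_closure (Set.mem_insert _ _)
lemma sqrt5_mem_GK : ((Real.sqrt 5 : ℝ) : ℂ) ∈ GKfield :=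
  Subfield.subset_closure (Set.mem_insert_of_mem _ rfl)
noncomputable def iK : GKfield := ⟨Complex.I, I_mem_GK⟩
noncomputable def r5K : GKfield := ⟨(Real.sqrt 5 : ℝ), sqrt5_mem_GK⟩
/-- reduced norm of x₀ + x₁ e -/
noncomputable def Nrd (σ : GKfield →+* GKfield) (A : GKfield × GKfield) : GKfield :=
  A.1 * σ A.1 - iK * (A.2 * σ A.2)
/-- multiplication in the cyclic algebra (K/ℚ(i), σ, i), e² = i, z e = e σ(z) -/
noncomputable def gaMul (σ : GKfield →+* GKfield) (A B : GKfield × GKfield) :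
    GKfield × GKfield :=
  (A.1 * B.1 + iK * (A.2 * σ B.2), A.1 * B.2 + A.2 * σ B.1)

/-! ### Auxiliary: descent over ℤ and ℚ -/

lemma key_zmod (p q t u : ZMod 5) (h1 : p^2 - q^2 + 2*t*u = 0)
    (h2 : 2*p*q - t^2 + u^2 = 0) : p = 0 ∧ q = 0 ∧ t = 0 ∧ u = 0 := by
  revert p q t u; decide

lemma div5 (p : ℤ) (h : (p : ZMod 5) = 0) : ∃ p' : ℤ, p = 5 * p' := by
  obtain ⟨p', hp⟩ := (ZMod.intCast_zmod_eq_zero_iff_dvd p 5).mp h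
  exact ⟨p', hp⟩

lemma descentZ : ∀ n : ℕ, ∀ p q r s t u v w : ℤ,
    p.natAbs + q.natAbs + r.natAbs + s.natAbs + t.natAbs + u.natAbs + v.natAbs + w.natAbs = n →
    p^2 - q^2 - 5*r^2 + 5*s^2 + 2*t*u - 10*v*w = 0 →
    2*p*q - 10*r*s - t^2 + u^2 + 5*v^2 - 5*w^2 = 0 →
    p = 0 ∧ q = 0 ∧ r = 0 ∧ s = 0 ∧ t = 0 ∧ u = 0 ∧ v = 0 ∧ w = 0 := by
  intro n
  induction n using Nat.strong_induction_on with
  | _ n ih =>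
    intro p q r s t u v w hn h1 h2
    have c1 : ((p:ZMod 5))^2 - (q:ZMod 5)^2 + 2*(t:ZMod 5)*(u:ZMod 5) = 0 := by
      have := congrArg (Int.cast : ℤ → ZMod 5) h1
      push_cast at this
      linear_combination this + (r^2 - s^2 + 2*(v:ZMod 5)*w) * (by decide : (5:ZMod 5) = 0)
    have c2 : 2*(p:ZMod 5)*(q:ZMod 5) - (t:ZMod 5)^2 + (u:ZMod 5)^2 = 0 := by
      have := congrArg (Int.cast : ℤ → ZMod 5) h2
      push_cast at this
      linear_combination this + (2*(r:ZMod 5)*s - v^2 + w^2) * (by decide : (5:ZMod 5) = 0)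
    obtain ⟨hp0, hq0, ht0, hu0⟩ := key_zmod _ _ _ _ c1 c2
    obtain ⟨p', rfl⟩ := div5 p hp0
    obtain ⟨q', rfl⟩ := div5 q hq0
    obtain ⟨t', rfl⟩ := div5 t ht0
    obtain ⟨u', rfl⟩ := div5 u hu0
    have h1' : 5*p'^2 - 5*q'^2 - r^2 + s^2 + 10*t'*u' - 2*v*w = 0 := by linarith [h1]
    have h2' : 10*p'*q' - 2*r*s - 5*t'^2 + 5*u'^2 + v^2 - w^2 = 0 := by linarith [h2]
    have d1 : ((r:ZMod 5))^2 - (s:ZMod 5)^2 + 2*(v:ZMod 5)*(w:ZMod 5) = 0 := by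
      have := congrArg (Int.cast : ℤ → ZMod 5) h1'
      push_cast at this
      linear_combination -this + (p'^2 - q'^2 + 2*(t':ZMod 5)*u') * (by decide : (5:ZMod 5) = 0)
    have d2 : 2*(r:ZMod 5)*(s:ZMod 5) - (v:ZMod 5)^2 + (w:ZMod 5)^2 = 0 := by
      have := congrArg (Int.cast : ℤ → ZMod 5) h2'
      push_cast at this
      linear_combination -this + (2*(p':ZMod 5)*q' - t'^2 + u'^2) * (by decide : (5:ZMod 5) = 0)
    obtain ⟨hr0, hs0, hv0, hw0⟩ := key_zmod _ _ _ _ d1 d2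
    obtain ⟨r', rfl⟩ := div5 r hr0
    obtain ⟨s', rfl⟩ := div5 s hs0
    obtain ⟨v', rfl⟩ := div5 v hv0
    obtain ⟨w', rfl⟩ := div5 w hw0
    have e1 : p'^2 - q'^2 - 5*r'^2 + 5*s'^2 + 2*t'*u' - 10*v'*w' = 0 := by linarith [h1']
    have e2 : 2*p'*q' - 10*r'*s' - t'^2 + u'^2 + 5*v'^2 - 5*w'^2 = 0 := by linarith [h2']
    clear h1 h2 h1' h2' c1 c2 d1 d2 hp0 hq0 ht0 hu0 hr0 hs0 hv0 hw0
    simp only [Int.natAbs_mul, (by norm_num : (5:ℤ).natAbs = 5)] at hn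
    rcases Nat.eq_zero_or_pos n with hn0 | hnpos
    · subst hn0
      clear e1 e2
      refine ⟨?_, ?_, ?_, ?_, ?_, ?_, ?_, ?_⟩ <;> omega
    · have hm : p'.natAbs + q'.natAbs + r'.natAbs + s'.natAbs + t'.natAbs + u'.natAbs
          + v'.natAbs + w'.natAbs < n := by
        clear e1 e2
        omega
      obtain ⟨e1', e2', e3', e4', e5', e6', e7', e8'⟩ :=
        ih _ hm p' q' r' s' t' u' v' w' rfl e1 e2
      subst e1' e2' e3' e4' e5' e6' e7' e8'
      norm_num

lemma rat_scale (x : ℚ) (m : ℤ) : ((x.num * m : ℤ) : ℚ) = x * ((x.den : ℤ) * m) := by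
  have h : (x.num : ℚ) = x * (x.den : ℚ) := by
    rw [eq_comm, mul_comm]
    exact_mod_cast Rat.den_mul_eq_num x
  push_cast
  rw [h]; ring

lemma rat_scale' (x : ℚ) (D : ℤ) (h : (x.den : ℤ) ∣ D) : ∃ P : ℤ, (P:ℚ) = x * D := by
  obtain ⟨m, rfl⟩ := h
  exact ⟨x.num * m, by rw [rat_scale x m]; push_cast; ring⟩

lemma descentQ (p q r s t u v w : ℚ)
    (h1 : p^2 - q^2 - 5*r^2 + 5*s^2 + 2*t*u - 10*v*w = 0)
    (h2 : 2*p*q - 10*r*s - t^2 + u^2 + 5*v^2 - 5*w^2 = 0) :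
    p = 0 ∧ q = 0 ∧ r = 0 ∧ s = 0 ∧ t = 0 ∧ u = 0 ∧ v = 0 ∧ w = 0 := by
  set D : ℤ := (p.den : ℤ) * q.den * r.den * s.den * t.den * u.den * v.den * w.den with hDdef
  have hD : (0:ℤ) < D := by positivity
  obtain ⟨P, hP⟩ := rat_scale' p D ⟨(q.den:ℤ)*r.den*s.den*t.den*u.den*v.den*w.den, by rw [hDdef]; ring⟩
  obtain ⟨Q, hQ⟩ := rat_scale' q D ⟨(p.den:ℤ)*r.den*s.den*t.den*u.den*v.den*w.den, by rw [hDdef]; ring⟩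
  obtain ⟨R, hR⟩ := rat_scale' r D ⟨(p.den:ℤ)*q.den*s.den*t.den*u.den*v.den*w.den, by rw [hDdef]; ring⟩
  obtain ⟨S, hS⟩ := rat_scale' s D ⟨(p.den:ℤ)*q.den*r.den*t.den*u.den*v.den*w.den, by rw [hDdef]; ring⟩
  obtain ⟨T, hT⟩ := rat_scale' t D ⟨(p.den:ℤ)*q.den*r.den*s.den*u.den*v.den*w.den, by rw [hDdef]; ring⟩
  obtain ⟨U, hU⟩ := rat_scale' u D ⟨(p.den:ℤ)*q.den*r.den*s.den*t.den*v.den*w.den, by rw [hDdef]; ring⟩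
  obtain ⟨V, hV⟩ := rat_scale' v D ⟨(p.den:ℤ)*q.den*r.den*s.den*t.den*u.den*w.den, by rw [hDdef]; ring⟩
  obtain ⟨W, hW⟩ := rat_scale' w D ⟨(p.den:ℤ)*q.den*r.den*s.den*t.den*u.den*v.den, by rw [hDdef]; ring⟩
  have H1 : ((P:ℚ))^2 - (Q:ℚ)^2 - 5*(R:ℚ)^2 + 5*(S:ℚ)^2 + 2*(T:ℚ)*(U:ℚ) - 10*(V:ℚ)*(W:ℚ) = 0 := by
    rw [hP, hQ, hR, hS, hT, hU, hV, hW]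
    linear_combination ((D:ℚ))^2 * h1
  have H2 : 2*((P:ℚ))*(Q:ℚ) - 10*(R:ℚ)*(S:ℚ) - (T:ℚ)^2 + (U:ℚ)^2 + 5*(V:ℚ)^2 - 5*(W:ℚ)^2 = 0 := by
    rw [hP, hQ, hR, hS, hT, hU, hV, hW]
    linear_combination ((D:ℚ))^2 * h2
  have H1' : P^2 - Q^2 - 5*R^2 + 5*S^2 + 2*T*U - 10*V*W = 0 := by exact_mod_cast H1
  have H2' : 2*P*Q - 10*R*S - T^2 + U^2 + 5*V^2 - 5*W^2 = 0 := by exact_mod_cast H2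
  obtain ⟨eP, eQ, eR, eS, eT, eU, eV, eW⟩ := descentZ _ P Q R S T U V W rfl H1' H2'
  have hDQ : ((D:ℚ)) ≠ 0 := by exact_mod_cast hD.ne'
  subst eP eQ eR eS eT eU eV eW
  refine ⟨?_, ?_, ?_, ?_, ?_, ?_, ?_, ?_⟩
  · rcases mul_eq_zero.mp ((by push_cast at hP ⊢; linarith : p * (D:ℚ) = 0)) with h | h
    exacts [h, absurd h hDQ]
  · rcases mul_eq_zero.mp ((by push_cast at hQ ⊢; linarith : q * (D:ℚ) = 0)) with h | h
    exacts [h, absurd h hDQ]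
  · rcases mul_eq_zero.mp ((by push_cast at hR ⊢; linarith : r * (D:ℚ) = 0)) with h | h
    exacts [h, absurd h hDQ]
  · rcases mul_eq_zero.mp ((by push_cast at hS ⊢; linarith : s * (D:ℚ) = 0)) with h | h
    exacts [h, absurd h hDQ]
  · rcases mul_eq_zero.mp ((by push_cast at hT ⊢; linarith : t * (D:ℚ) = 0)) with h | h
    exacts [h, absurd h hDQ]
  · rcases mul_eq_zero.mp ((by push_cast at hU ⊢; linarith : u * (D:ℚ) = 0)) with h | h
    exacts [h, absurd h hDQ]
  · rcases mul_eq_zero.mp ((by push_cast at hV ⊢; linarith : v * (D:ℚ) = 0)) with h | h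
    exacts [h, absurd h hDQ]
  · rcases mul_eq_zero.mp ((by push_cast at hW ⊢; linarith : w * (D:ℚ) = 0)) with h | h
    exacts [h, absurd h hDQ]

/-! ### Auxiliary: the span description of `GKfield` -/

noncomputable abbrev sq5 : ℂ := ((Real.sqrt 5 : ℝ) : ℂ)

lemma sq5_sq : sq5 ^ 2 = 5 := by
  rw [← Complex.ofReal_pow, Real.sq_sqrt (by norm_num : (5:ℝ) ≥ 0)]
  norm_num

lemma rat_I_indep (e f : ℚ) (h : (e:ℂ) + (f:ℂ) * I = 0) : e = 0 ∧ f = 0 := by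
  have hre := congrArg Complex.re h
  have him := congrArg Complex.im h
  simp at hre him
  exact ⟨by exact_mod_cast hre, by exact_mod_cast him⟩

def InSpan (z : ℂ) : Prop :=
  ∃ a b c d : ℚ, z = (a:ℂ) + (b:ℂ)*I + (c:ℂ)*sq5 + (d:ℂ)*(sq5*I)

lemma inSpan_mul {z z' : ℂ} (hz : InSpan z) (hz' : InSpan z') : InSpan (z * z') := by
  obtain ⟨a, b, c, d, rfl⟩ := hz
  obtain ⟨a', b', c', d', rfl⟩ := hz'
  refine ⟨a*a' - b*b' + 5*(c*c') - 5*(d*d'), a*b' + a'*b + 5*(c*d') + 5*(c'*d),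
    a*c' + a'*c - b*d' - b'*d, a*d' + a'*d + b*c' + b'*c, ?_⟩
  push_cast
  linear_combination ((b:ℂ)*b' + (d:ℂ)*d'*sq5^2 + ((b:ℂ)*d'+(b':ℂ)*d)*sq5) * Complex.I_sq
    + ((c:ℂ)*c' - (d:ℂ)*d' + ((c:ℂ)*d'+(c':ℂ)*d)*I) * sq5_sq

lemma inSpan_inv {z : ℂ} (hz : InSpan z) : InSpan z⁻¹ := by
  obtain ⟨a, b, c, d, rfl⟩ := hz
  by_cases h0 : (a:ℂ) + (b:ℂ)*I + (c:ℂ)*sq5 + (d:ℂ)*(sq5*I) = 0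
  · rw [h0]; exact ⟨0, 0, 0, 0, by simp⟩
  · set e : ℚ := a^2 - b^2 - 5*c^2 + 5*d^2 with he_def
    set f : ℚ := 2*a*b - 10*c*d with hf_def
    have hNq : e^2 + f^2 ≠ 0 := by
      intro hN
      have he : e = 0 := by nlinarith [sq_nonneg e, sq_nonneg f]
      have hf : f = 0 := by nlinarith [sq_nonneg e, sq_nonneg f]
      obtain ⟨ha, hb, hc, hd, -, -, -, -⟩ := descentQ a b c d 0 0 0 0
        (by rw [he_def] at he; linear_combination he) (by rw [hf_def] at hf; linear_combination hf)
      exact h0 (by rw [ha, hb, hc, hd]; push_cast; ring)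
    have h1 : ((a:ℂ) + (b:ℂ)*I + (c:ℂ)*sq5 + (d:ℂ)*(sq5*I)) *
        ((a:ℂ) + (b:ℂ)*I - (c:ℂ)*sq5 - (d:ℂ)*(sq5*I)) = (e:ℂ) + (f:ℂ)*I := by
      rw [he_def, hf_def]; push_cast
      linear_combination ((b:ℂ)^2 - 5*(d:ℂ)^2) * Complex.I_sq
        - (((c:ℂ) + (d:ℂ)*I)^2) * sq5_sq
    set w : ℂ := ((a:ℂ) + (b:ℂ)*I - (c:ℂ)*sq5 - (d:ℂ)*(sq5*I)) * ((e:ℂ) - (f:ℂ)*I) with hw_def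
    have h2 : ((a:ℂ) + (b:ℂ)*I + (c:ℂ)*sq5 + (d:ℂ)*(sq5*I)) * w = (((e^2 + f^2 : ℚ)):ℂ) := by
      rw [hw_def, ← mul_assoc, h1]; push_cast
      linear_combination (-(f:ℂ)^2) * Complex.I_sq
    have hw : InSpan w := inSpan_mul ⟨a, b, -c, -d, by push_cast; ring⟩
      ⟨e, -f, 0, 0, by push_cast; ring⟩
    have hNC : (((e^2 + f^2 : ℚ)):ℂ) ≠ 0 := by exact_mod_cast hNq
    have hzinv : ((a:ℂ) + (b:ℂ)*I + (c:ℂ)*sq5 + (d:ℂ)*(sq5*I))⁻¹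
        = w * (((e^2 + f^2 : ℚ)):ℂ)⁻¹ := by
      apply inv_eq_of_mul_eq_one_left
      have : w * (((e^2 + f^2 : ℚ)):ℂ)⁻¹ * ((a:ℂ) + (b:ℂ)*I + (c:ℂ)*sq5 + (d:ℂ)*(sq5*I))
          = (((a:ℂ) + (b:ℂ)*I + (c:ℂ)*sq5 + (d:ℂ)*(sq5*I)) * w) * (((e^2 + f^2 : ℚ)):ℂ)⁻¹ := by
        ring
      rw [this, h2, mul_inv_cancel₀ hNC]
    obtain ⟨α, β, γ, δ, hwr⟩ := hw
    refine ⟨α/(e^2+f^2), β/(e^2+f^2), γ/(e^2+f^2), δ/(e^2+f^2), ?_⟩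
    have hNC2 : ((e:ℂ))^2 + (f:ℂ)^2 ≠ 0 := by push_cast at hNC; exact hNC
    rw [hzinv, hwr]
    push_cast
    field_simp
    try ring

noncomputable def spanSF : Subfield ℂ where
  carrier := {z | InSpan z}
  one_mem' := ⟨1, 0, 0, 0, by push_cast; ring⟩
  zero_mem' := ⟨0, 0, 0, 0, by push_cast; ring⟩
  mul_mem' := inSpan_mul
  add_mem' := by
    rintro x y ⟨a,b,c,d,rfl⟩ ⟨a',b',c',d',rfl⟩
    exact ⟨a+a', b+b', c+c', d+d', by push_cast; ring⟩
  neg_mem' := by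
    rintro x ⟨a,b,c,d,rfl⟩
    exact ⟨-a, -b, -c, -d, by push_cast; ring⟩
  inv_mem' := fun x hx => inSpan_inv hx

lemma GK_le_span : GKfield ≤ spanSF := by
  rw [GKfield, Subfield.closure_le]
  rintro z (rfl | rfl)
  · exact ⟨0, 1, 0, 0, by push_cast; ring⟩
  · exact ⟨0, 0, 1, 0, by push_cast; ring⟩

lemma GK_repr (z : GKfield) : InSpan (z : ℂ) := GK_le_span z.2

lemma GK_lift (z : GKfield) (a b c d : ℚ)
    (h : (z:ℂ) = (a:ℂ) + (b:ℂ)*I + (c:ℂ)*sq5 + (d:ℂ)*(sq5*I)) :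
    z = (a : GKfield) + (b : GKfield) * iK + (c : GKfield) * r5K
        + (d : GKfield) * (r5K * iK) := by
  apply Subtype.coe_injective
  push_cast
  rw [h]
  norm_num [iK, r5K]

lemma sigma_repr (σ : GKfield →+* GKfield) (hσi : σ iK = iK) (hσ5 : σ r5K = -r5K)
    (z : GKfield) (a b c d : ℚ)
    (h : (z:ℂ) = (a:ℂ) + (b:ℂ)*I + (c:ℂ)*sq5 + (d:ℂ)*(sq5*I)) :
    ((σ z : GKfield) : ℂ) = (a:ℂ) + (b:ℂ)*I - (c:ℂ)*sq5 - (d:ℂ)*(sq5*I) := by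
  rw [GK_lift z a b c d h]
  rw [map_add, map_add, map_add, map_mul, map_mul, map_mul, map_mul,
    map_ratCast, map_ratCast, map_ratCast, map_ratCast, hσi, hσ5]
  push_cast
  norm_num [iK, r5K]
  ring

/-- The golden algebra is division: the reduced norm of any nonzero element is nonzero. -/
theorem stmt1 (σ : GKfield →+* GKfield) (hσi : σ iK = iK) (hσ5 : σ r5K = -r5K)
    (A : GKfield × GKfield) (hA : A ≠ 0) :
    Nrd σ A ≠ 0 := by
  intro hN
  obtain ⟨a0, b0, c0, d0, h0⟩ := GK_repr A.1
  obtain ⟨a1, b1, c1, d1, h1⟩ := GK_repr A.2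
  have hs0 := sigma_repr σ hσi hσ5 A.1 a0 b0 c0 d0 h0
  have hs1 := sigma_repr σ hσi hσ5 A.2 a1 b1 c1 d1 h1
  have hC : ((Nrd σ A : GKfield) : ℂ) = 0 := by rw [hN]; rfl
  rw [Nrd] at hC
  push_cast at hC
  rw [h0, h1, hs0, hs1] at hC
  have hiK : ((iK : GKfield) : ℂ) = I := rfl
  rw [hiK] at hC
  -- extract rational equations
  set E : ℚ := a0^2 - b0^2 - 5*c0^2 + 5*d0^2 + 2*a1*b1 - 10*c1*d1 with hE_def
  set F : ℚ := 2*a0*b0 - 10*c0*d0 - a1^2 + b1^2 + 5*c1^2 - 5*d1^2 with hF_def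
  have hEF : (E:ℂ) + (F:ℂ)*I = 0 := by
    rw [hE_def, hF_def]; push_cast
    linear_combination hC + (((c0:ℂ)+(d0:ℂ)*I)^2 - I*((c1:ℂ)+(d1:ℂ)*I)^2) * sq5_sq
      - ((b0:ℂ)^2 - 5*(d0:ℂ)^2 - 2*(a1:ℂ)*(b1:ℂ) + 10*(c1:ℂ)*(d1:ℂ)
          - ((b1:ℂ)^2 - 5*(d1:ℂ)^2)*I) * Complex.I_sq
  obtain ⟨hE, hF⟩ := rat_I_indep E F hEF
  rw [hE_def] at hE; rw [hF_def] at hF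
  obtain ⟨e1, e2, e3, e4, e5, e6, e7, e8⟩ := descentQ a0 b0 c0 d0 a1 b1 c1 d1
    (by linear_combination hE) (by linear_combination hF)
  apply hA
  have hA1 : A.1 = 0 := by
    apply Subtype.coe_injective
    show (A.1 : ℂ) = ((0 : GKfield) : ℂ)
    rw [h0, e1, e2, e3, e4]; push_cast; ring
  have hA2 : A.2 = 0 := by
    apply Subtype.coe_injective
    show (A.2 : ℂ) = ((0 : GKfield) : ℂ)
    rw [h1, e5, e6, e7, e8]; push_cast; ring
  exact Prod.ext hA1 hA2
end

section
/- The element i ∈ ℚ(i) is not a relative norm from ℚ(i,√5): there is no z ∈ ℚ(i,√5) with z·σ(z) = i, where σ is the nontrivial ℚ(i)-automorphism of ℚ(i,√5). -/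
open Complex

/- ### Auxiliary arithmetic lemmas -/

private lemma zmod1 : ∀ a b c : ZMod 5, a^2 = b^2 → 2*(a*b) = c^2 → a = 0 ∧ b = 0 ∧ c = 0 := by
  decide

private lemma zmod2 : ∀ r s : ZMod 5, r^2 = s^2 → 2*(r*s) = 0 → r = 0 ∧ s = 0 := by
  decide

private lemma descent : ∀ n : ℕ, ∀ P Q R S N : ℤ, N.natAbs = n →
    P^2 - Q^2 = 5*(R^2 - S^2) → 2*(P*Q - 5*(R*S)) = N^2 → N = 0 := by
  intro n
  induction n using Nat.strong_induction_on with
  | _ n ih =>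
    intro P Q R S N hn h1 h2
    by_contra hN0
    have h5 : (5 : ZMod 5) = 0 := by decide
    -- reduce mod 5
    have c1 : (P : ZMod 5)^2 = (Q : ZMod 5)^2 := by
      have h := congrArg (fun t : ℤ => (t : ZMod 5)) h1
      push_cast at h
      linear_combination h + ((R:ZMod 5)^2 - (S:ZMod 5)^2)*h5
    have c2 : 2*((P : ZMod 5)*(Q : ZMod 5)) = (N : ZMod 5)^2 := by
      have h := congrArg (fun t : ℤ => (t : ZMod 5)) h2
      push_cast at h
      linear_combination h + 2*((R:ZMod 5)*(S:ZMod 5))*h5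
    obtain ⟨hP0, hQ0, hNN0⟩ := zmod1 _ _ _ c1 c2
    obtain ⟨P', rfl⟩ := (ZMod.intCast_zmod_eq_zero_iff_dvd P 5).mp hP0
    obtain ⟨Q', rfl⟩ := (ZMod.intCast_zmod_eq_zero_iff_dvd Q 5).mp hQ0
    obtain ⟨N', rfl⟩ := (ZMod.intCast_zmod_eq_zero_iff_dvd N 5).mp hNN0
    have h1' : R^2 - S^2 = 5*(P'^2 - Q'^2) :=
      mul_left_cancel₀ (by norm_num : (5:ℤ) ≠ 0) (by linear_combination (-1 : ℤ) * h1)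
    have hRS : 2*(R*S) = 5*(2*(P'*Q') - N'^2) :=
      mul_left_cancel₀ (by norm_num : (5:ℤ) ≠ 0) (by linear_combination (-1 : ℤ) * h2)
    have c3 : (R : ZMod 5)^2 = (S : ZMod 5)^2 := by
      have h := congrArg (fun t : ℤ => (t : ZMod 5)) h1'
      push_cast at h
      linear_combination h + ((P':ZMod 5)^2 - (Q':ZMod 5)^2)*h5
    have c4 : 2*((R : ZMod 5)*(S : ZMod 5)) = 0 := by
      have h := congrArg (fun t : ℤ => (t : ZMod 5)) hRS
      push_cast at h
      linear_combination h + (2*((P':ZMod 5)*(Q':ZMod 5)) - (N':ZMod 5)^2)*h5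
    obtain ⟨hR0, hS0⟩ := zmod2 _ _ c3 c4
    obtain ⟨R', rfl⟩ := (ZMod.intCast_zmod_eq_zero_iff_dvd R 5).mp hR0
    obtain ⟨S', rfl⟩ := (ZMod.intCast_zmod_eq_zero_iff_dvd S 5).mp hS0
    have h1'' : P'^2 - Q'^2 = 5*(R'^2 - S'^2) :=
      mul_left_cancel₀ (by norm_num : (5:ℤ) ≠ 0) (by linear_combination (-1 : ℤ) * h1')
    have h2'' : 2*(P'*Q' - 5*(R'*S')) = N'^2 :=
      mul_left_cancel₀ (by norm_num : (25:ℤ) ≠ 0) (by linear_combination h2)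
    have hN'0 : N' ≠ 0 := by
      intro h; apply hN0; rw [h]; ring
    have hlt : N'.natAbs < n := by
      rw [← hn, Int.natAbs_mul]
      have : N'.natAbs ≠ 0 := Int.natAbs_ne_zero.mpr hN'0
      simp only [Int.natAbs_natCast]
      omega
    exact hN'0 (ih N'.natAbs hlt P' Q' R' S' N' rfl h1'' h2'')

private lemma ratlemma : ¬ ∃ p q r s : ℚ, p^2 - q^2 = 5*(r^2 - s^2) ∧ 2*(p*q - 5*(r*s)) = 1 := by
  rintro ⟨p, q, r, s, h1, h2⟩
  have numden : ∀ t : ℚ, (t.num : ℚ) = t * t.den := by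
    intro t
    have h := Rat.num_div_den t
    rw [div_eq_iff (by exact_mod_cast t.den_nz)] at h
    exact h
  set D : ℤ := ((p.den * q.den * r.den * s.den : ℕ) : ℤ) with hDdef
  have hD0 : D ≠ 0 := by
    have := p.den_nz; have := q.den_nz; have := r.den_nz; have := s.den_nz
    simp only [hDdef, ne_eq, Int.natCast_eq_zero, Nat.mul_eq_zero]
    tauto
  set P : ℤ := p.num * ((q.den * r.den * s.den : ℕ) : ℤ) with hPdef
  set Q : ℤ := q.num * ((p.den * r.den * s.den : ℕ) : ℤ) with hQdef
  set R : ℤ := r.num * ((p.den * q.den * s.den : ℕ) : ℤ) with hRdef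
  set S : ℤ := s.num * ((p.den * q.den * r.den : ℕ) : ℤ) with hSdef
  have hP : (P : ℚ) = p * D := by rw [hPdef, hDdef]; push_cast; rw [numden p]; ring
  have hQ : (Q : ℚ) = q * D := by rw [hQdef, hDdef]; push_cast; rw [numden q]; ring
  have hR : (R : ℚ) = r * D := by rw [hRdef, hDdef]; push_cast; rw [numden r]; ring
  have hS : (S : ℚ) = s * D := by rw [hSdef, hDdef]; push_cast; rw [numden s]; ring
  have e1 : (P : ℚ)^2 - (Q : ℚ)^2 = 5*((R : ℚ)^2 - (S : ℚ)^2) := by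
    rw [hP, hQ, hR, hS]; linear_combination ((D:ℚ))^2 * h1
  have e2 : 2*((P : ℚ)*(Q : ℚ) - 5*((R : ℚ)*(S : ℚ))) = ((D : ℚ))^2 := by
    rw [hP, hQ, hR, hS]; linear_combination ((D:ℚ))^2 * h2
  have e1z : P^2 - Q^2 = 5*(R^2 - S^2) := by exact_mod_cast e1
  have e2z : 2*(P*Q - 5*(R*S)) = D^2 := by exact_mod_cast e2
  exact hD0 (descent D.natAbs P Q R S D rfl e1z e2z)

private lemma rat_sq_ne_five (u : ℚ) : u^2 ≠ 5 := by
  intro h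
  have h5 : Irrational (Real.sqrt 5) := (by norm_num : Nat.Prime 5).irrational_sqrt
  apply h5
  refine ⟨|u|, ?_⟩
  have hu : ((|u| : ℚ) : ℝ)^2 = 5 := by
    exact_mod_cast (by rw [_root_.sq_abs u, h] : (|u|^2 : ℚ) = 5)
  rw [show (5:ℝ) = ((|u|:ℚ):ℝ)^2 from hu.symm, Real.sqrt_sq (by positivity)]

local notation "y5" => ((Real.sqrt 5 : ℝ) : ℂ)

private lemma hysq : y5^2 = 5 := by
  exact_mod_cast Real.sq_sqrt (by norm_num : (0:ℝ) ≤ 5)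

private lemma five_not_sq_qi {a b c d : ℚ} (h1 : a^2 - b^2 - 5*c^2 + 5*d^2 = 0)
    (h2 : 2*(a*b - 5*(c*d)) = 0) : a = 0 ∧ b = 0 ∧ c = 0 ∧ d = 0 := by
  have hsq : (a^2+b^2)^2 = (5*(c^2+d^2))^2 := by
    linear_combination (a^2 - b^2 + 5*c^2 - 5*d^2) * h1 + 2*(a*b + 5*(c*d)) * h2
  have hfac : (a^2+b^2 - 5*(c^2+d^2)) * (a^2+b^2 + 5*(c^2+d^2)) = 0 := by linear_combination hsq
  have hsum : a^2 + b^2 = 5*(c^2+d^2) := by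
    rcases mul_eq_zero.mp hfac with h | h
    · linarith
    · linarith [sq_nonneg a, sq_nonneg b, sq_nonneg c, sq_nonneg d]
  have ha2 : a^2 = 5*c^2 := by linarith
  have hb2 : b^2 = 5*d^2 := by linarith
  have hac : a = 0 ∧ c = 0 := by
    rcases eq_or_ne c 0 with hc | hc
    · subst hc
      refine ⟨?_, rfl⟩
      have : a^2 = 0 := by linarith
      exact pow_eq_zero_iff two_ne_zero |>.mp this
    · exact absurd (by field_simp; linarith : (a/c)^2 = 5) (rat_sq_ne_five (a/c))
  have hbd : b = 0 ∧ d = 0 := by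
    rcases eq_or_ne d 0 with hd | hd
    · subst hd
      refine ⟨?_, rfl⟩
      have : b^2 = 0 := by linarith
      exact pow_eq_zero_iff two_ne_zero |>.mp this
    · exact absurd (by field_simp; linarith : (b/d)^2 = 5) (rat_sq_ne_five (b/d))
  exact ⟨hac.1, hbd.1, hac.2, hbd.2⟩

private def K0set : Set ℂ :=
  {x | ∃ a b c d : ℚ, x = (a:ℂ) + (b:ℂ)*Complex.I + (c:ℂ)*y5 + (d:ℂ)*(Complex.I*y5)}

private lemma K0_one : (1:ℂ) ∈ K0set := ⟨1, 0, 0, 0, by push_cast; ring⟩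

private lemma K0_zero : (0:ℂ) ∈ K0set := ⟨0, 0, 0, 0, by push_cast; ring⟩

private lemma K0_add : ∀ x ∈ K0set, ∀ y ∈ K0set, x + y ∈ K0set := by
  rintro x ⟨a,b,c,d,rfl⟩ y ⟨A,B,C,D,rfl⟩
  exact ⟨a+A, b+B, c+C, d+D, by push_cast; ring⟩

private lemma K0_neg : ∀ x ∈ K0set, -x ∈ K0set := by
  rintro x ⟨a,b,c,d,rfl⟩
  exact ⟨-a, -b, -c, -d, by push_cast; ring⟩

private lemma K0_mul : ∀ x ∈ K0set, ∀ y ∈ K0set, x * y ∈ K0set := by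
  rintro x ⟨a,b,c,d,rfl⟩ y ⟨A,B,C,D,rfl⟩
  refine ⟨a*A - b*B + 5*(c*C) - 5*(d*D), a*B + b*A + 5*(c*D) + 5*(d*C),
         a*C + c*A - b*D - d*B, a*D + d*A + b*C + c*B, ?_⟩
  push_cast
  linear_combination ((d:ℂ)*(D:ℂ)*y5^2 + (d:ℂ)*(B:ℂ)*y5 + (b:ℂ)*(D:ℂ)*y5 + (b:ℂ)*(B:ℂ)) * Complex.I_sq
    + (-(d:ℂ)*(D:ℂ) + (d:ℂ)*(C:ℂ)*Complex.I + (c:ℂ)*(D:ℂ)*Complex.I + (c:ℂ)*(C:ℂ)) * hysq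

set_option maxHeartbeats 2000000 in
private lemma K0_inv : ∀ x ∈ K0set, x⁻¹ ∈ K0set := by

  rintro x ⟨a,b,c,d,rfl⟩
  rcases eq_or_ne ((a:ℂ) + (b:ℂ)*Complex.I + (c:ℂ)*y5 + (d:ℂ)*(Complex.I*y5)) 0 with h0 | h0
  · rw [h0, inv_zero]
    exact ⟨0, 0, 0, 0, by push_cast; ring⟩
  · have hn0 : ((a^2 - b^2 - 5*c^2 + 5*d^2)^2 + (2*(a*b - 5*(c*d)))^2) ≠ 0 := by
      intro hzero
      have he0 : (a^2 - b^2 - 5*c^2 + 5*d^2) = 0 := by nlinarith [sq_nonneg (a^2 - b^2 - 5*c^2 + 5*d^2), sq_nonneg (2*(a*b - 5*(c*d)))]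
      have hf0 : (2*(a*b - 5*(c*d))) = 0 := by nlinarith [sq_nonneg (a^2 - b^2 - 5*c^2 + 5*d^2), sq_nonneg (2*(a*b - 5*(c*d)))]
      obtain ⟨ha, hb, hc, hd⟩ := five_not_sq_qi he0 hf0
      apply h0
      rw [ha, hb, hc, hd]
      push_cast
      ring
    have hnC : ((((a^2 - b^2 - 5*c^2 + 5*d^2)^2 + (2*(a*b - 5*(c*d)))^2) : ℚ) : ℂ) ≠ 0 := by exact_mod_cast hn0
    have key : ((a:ℂ) + (b:ℂ)*Complex.I + (c:ℂ)*y5 + (d:ℂ)*(Complex.I*y5)) * (((a*(a^2 - b^2 - 5*c^2 + 5*d^2) + b*(2*(a*b - 5*(c*d))) : ℚ) : ℂ) + ((b*(a^2 - b^2 - 5*c^2 + 5*d^2) - a*(2*(a*b - 5*(c*d))) : ℚ) : ℂ)*Complex.I - ((c*(a^2 - b^2 - 5*c^2 + 5*d^2) + d*(2*(a*b - 5*(c*d))) : ℚ) : ℂ)*y5 - ((d*(a^2 - b^2 - 5*c^2 + 5*d^2) - c*(2*(a*b - 5*(c*d))) : ℚ) : ℂ)*(Complex.I*y5)) = ((((a^2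 - b^2 - 5*c^2 + 5*d^2)^2 + (2*(a*b - 5*(c*d)))^2) : ℚ) : ℂ) := by
      push_cast
      linear_combination (-5*(d:ℂ)^4*y5^2 - 5*(c:ℂ)^2*(d:ℂ)^2*y5^2 - 10*(b:ℂ)*(c:ℂ)^2*(d:ℂ)*y5 + 5*(b:ℂ)^2*(d:ℂ)^2 + (b:ℂ)^2*(d:ℂ)^2*y5^2 - 5*(b:ℂ)^2*(c:ℂ)^2 - (b:ℂ)^4 + 10*(a:ℂ)*(c:ℂ)*(d:ℂ)^2*y5 + 10*(a:ℂ)*(b:ℂ)*(c:ℂ)*(d:ℂ) + 2*(a:ℂ)*(b:ℂ)*(c:ℂ)*(d:ℂ)*y5^2 + 2*(a:ℂ)*(b:ℂ)^2*(c:ℂ)*y5 - (a:ℂ)^2*(d:ℂ)^2*y5^2 - 2*(a:ℂ)^2*(b:ℂ)*(d:ℂ)*y5 - (a:ℂ)^2*(b:ℂ)^2) * Complex.I_sq + (5*(d:ℂ)^4 + 10*(c:ℂ)^2*(d:ℂ)^2 + 5*(c:ℂ)^4 - (b:ℂ)^2*(d:ℂ)^2 + 2*(b:ℂ)^2*(c:ℂ)*(d:ℂ)*Complex.I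 + (b:ℂ)^2*(c:ℂ)^2 - 2*(a:ℂ)*(b:ℂ)*(d:ℂ)^2*Complex.I - 4*(a:ℂ)*(b:ℂ)*(c:ℂ)*(d:ℂ) + 2*(a:ℂ)*(b:ℂ)*(c:ℂ)^2*Complex.I + (a:ℂ)^2*(d:ℂ)^2 - 2*(a:ℂ)^2*(c:ℂ)*(d:ℂ)*Complex.I - (a:ℂ)^2*(c:ℂ)^2) * hysq
    refine ⟨((a*(a^2 - b^2 - 5*c^2 + 5*d^2) + b*(2*(a*b - 5*(c*d))))/((a^2 - b^2 - 5*c^2 + 5*d^2)^2 + (2*(a*b - 5*(c*d)))^2)), ((b*(a^2 - b^2 - 5*c^2 + 5*d^2) - a*(2*(a*b - 5*(c*d))))/((a^2 - b^2 - 5*c^2 + 5*d^2)^2 + (2*(a*b - 5*(c*d)))^2)), (-((c*(a^2 - b^2 - 5*c^2 + 5*d^2) + d*(2*(a*b - 5*(c*d))))/((a^2 - b^2 - 5*c^2 + 5*d^2)^2 + (2*(a*b - 5*(c*d)))^2))), (-((d*(a^2 - b^2 - 5*c^2 + 5*d^2) - c*(2*(a*b - 5*(c*d))))/((a^2 - b^2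 - 5*c^2 + 5*d^2)^2 + (2*(a*b - 5*(c*d)))^2))), ?_⟩
    have hw : ((((a*(a^2 - b^2 - 5*c^2 + 5*d^2) + b*(2*(a*b - 5*(c*d))))/((a^2 - b^2 - 5*c^2 + 5*d^2)^2 + (2*(a*b - 5*(c*d)))^2) : ℚ)):ℂ) + ((((b*(a^2 - b^2 - 5*c^2 + 5*d^2) - a*(2*(a*b - 5*(c*d))))/((a^2 - b^2 - 5*c^2 + 5*d^2)^2 + (2*(a*b - 5*(c*d)))^2) : ℚ)):ℂ)*Complex.I + (((-((c*(a^2 - b^2 - 5*c^2 + 5*d^2) + d*(2*(a*b - 5*(c*d))))/((a^2 - b^2 - 5*c^2 + 5*d^2)^2 + (2*(a*b - 5*(c*d)))^2)) : ℚ)):ℂ)*y5 + (((-((d*(a^2 - b^2 - 5*c^2 + 5*d^2) - c*(2*(a*b - 5*(c*d))))/((a^2 - b^2 - 5*c^2 + 5*d^2)^2 + (2*(a*b - 5*(c*d)))^2)) : ℚ)):ℂ)*(Complex.I*y5)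
        = (((a*(a^2 - b^2 - 5*c^2 + 5*d^2) + b*(2*(a*b - 5*(c*d))) : ℚ) : ℂ) + ((b*(a^2 - b^2 - 5*c^2 + 5*d^2) - a*(2*(a*b - 5*(c*d))) : ℚ) : ℂ)*Complex.I - ((c*(a^2 - b^2 - 5*c^2 + 5*d^2) + d*(2*(a*b - 5*(c*d))) : ℚ) : ℂ)*y5 - ((d*(a^2 - b^2 - 5*c^2 + 5*d^2) - c*(2*(a*b - 5*(c*d))) : ℚ) : ℂ)*(Complex.I*y5)) / ((((a^2 - b^2 - 5*c^2 + 5*d^2)^2 + (2*(a*b - 5*(c*d)))^2) : ℚ) : ℂ) := by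
      push_cast
      ring
    rw [hw]
    exact inv_eq_of_mul_eq_one_right (by rw [← mul_div_assoc, key, div_self hnC])

private noncomputable def K0 : Subfield ℂ where
  carrier := K0set
  one_mem' := K0_one
  zero_mem' := K0_zero
  add_mem' {x y} hx hy := K0_add x hx y hy
  neg_mem' {x} hx := K0_neg x hx
  mul_mem' {x y} hx hy := K0_mul x hx y hy
  inv_mem' x hx := K0_inv x hx

private lemma mem_K0_iff' (x : ℂ) : x ∈ K0 ↔ x ∈ K0set := Iff.rfl



private lemma GK_le_K0 : GKfield ≤ K0 := by
  apply Subfield.closure_le.mpr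
  rintro x hx
  simp only [Set.mem_insert_iff, Set.mem_singleton_iff] at hx
  rcases hx with rfl | rfl
  · exact (mem_K0_iff' _).mpr ⟨0, 1, 0, 0, by push_cast; ring⟩
  · exact (mem_K0_iff' _).mpr ⟨0, 0, 1, 0, by push_cast; ring⟩

private lemma rat_coords {u v : ℚ} (h : (u:ℂ) + (v:ℂ)*Complex.I = Complex.I) : u = 0 ∧ v = 1 := by
  have hre := congrArg Complex.re h
  have him := congrArg Complex.im h
  simp at hre him
  exact ⟨by exact_mod_cast hre, by exact_mod_cast him⟩

/-- i is not a relative norm from ℚ(i,√5) to ℚ(i). -/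
theorem stmt2 (σ : GKfield →+* GKfield) (hσi : σ iK = iK) (hσ5 : σ r5K = -r5K) :
    ¬ ∃ z : GKfield, z * σ z = iK := by
  rintro ⟨z, hz⟩
  obtain ⟨a, b, c, d, hcoord⟩ := (mem_K0_iff' _).mp (GK_le_K0 z.2)
  have hzdec : z = ((a : ℚ) : GKfield) + ((b : ℚ) : GKfield)*iK + ((c : ℚ) : GKfield)*r5K
      + ((d : ℚ) : GKfield)*(iK*r5K) := by
    apply Subtype.ext
    push_cast [iK, r5K]
    exact hcoord
  have hσz : ((σ z : GKfield) : ℂ) = (a:ℂ) + (b:ℂ)*Complex.I - (c:ℂ)*y5 - (d:ℂ)*(Complex.I*y5) := by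
    rw [hzdec, map_add, map_add, map_add, map_mul, map_mul, map_mul, map_mul, map_ratCast, map_ratCast,
      map_ratCast, map_ratCast, hσi, hσ5]
    push_cast [iK, r5K]
    ring
  have hmain : ((z : ℂ)) * ((σ z : GKfield) : ℂ) = Complex.I := by
    have h := congrArg (Subtype.val) hz
    push_cast at h
    exact h
  rw [hcoord, hσz] at hmain
  have hef : ((a^2 - b^2 - 5*c^2 + 5*d^2 : ℚ) : ℂ) + ((2*(a*b - 5*(c*d)) : ℚ) : ℂ)*Complex.I
      = Complex.I := by
    push_cast
    linear_combination hmain - ((b:ℂ)^2 - (d:ℂ)^2*y5^2) * Complex.I_sq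
      - ((d:ℂ)^2 - 2*(c:ℂ)*(d:ℂ)*Complex.I - (c:ℂ)^2) * hysq
  obtain ⟨h1, h2⟩ := rat_coords hef
  exact ratlemma ⟨a, b, c, d, by linarith, by linarith⟩
end

section
/- In the ring of integers O_K of K = ℚ(e,√5) (with e² = i), the ideal generated by 2 factors as 2·O_K = ((1 + i·e)·O_K)⁴. -/
open NumberField

/-- In the ring of integers of K = ℚ(e,√5), with e² = i (e a primitive 8th root
of unity), the ideal (2) factors as ((1 + i·e))⁴, where i·e = e³. -/
theorem stmt7 (K : Type*) [Field K] [NumberField K] (e s5 : 𝓞 K)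
    (he : e ^ 4 = -1) (hs5 : s5 ^ 2 = 5)
    (hK : IntermediateField.adjoin ℚ {(e : K), (s5 : K)} = ⊤) :
    Ideal.span {(2 : 𝓞 K)} = (Ideal.span {1 + e ^ 2 * e}) ^ 4 := by
  rw [Ideal.span_singleton_pow]
  rw [Ideal.span_singleton_eq_span_singleton]
  apply associated_of_dvd_dvd
  · exact ⟨2*e^3 - 3*e^2 + 2*e, by
      linear_combination (e^8 + 4*e^5 - e^4 + 6*e^2 - 4*e + 1) * he⟩
  · exact ⟨2*e^3 + 3*e^2 + 2*e, by
      linear_combination (-(2*e^11) - 3*e^10 - 2*e^9 - 8*e^8 - 10*e^7 - 5*e^6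
        - 10*e^5 - 10*e^4 - 2*e^3 - 3*e^2 - 2*e + 2) * he⟩
end
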